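/- Let $P \subset \mathbb{R}^2$ be the pentagon with vertices $(0,0), (0,1), (1,0), (5,1), (1,5)$. Then the vertex $(0,0)$ is dark: there is no lattice point $z \in \mathbb{Z}^2 \setminus P$ such that $(0,0)$ is visible from $z$ and $\operatorname{conv}(P, z)$ contains exactly one more lattice point than $P$ and is normal. Equivalently (using that in dimension 2 all lattice polygons are normal and all jumps have height 1): every lattice point $z \notin P$ at height 1 over $P$ (i.e., $\operatorname{ht}_F(z) = -1$ for all visible facets $F$) has the property that the vertex $(0,0)$ is not visible from $z$. -/

import Mathlib

open Set Pointwise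

/-- A point of `ℝ^ι` is a lattice point if all its coordinates are integers. -/
def IsLatticePt {ι : Type} (x : ι → ℝ) : Prop := ∀ i, ∃ n : ℤ, x i = n

/-- A lattice polytope: the convex hull of a nonempty finite set of lattice points. -/
def IsLatticePolytope {ι : Type} (P : Set (ι → ℝ)) : Prop :=
  ∃ V : Set (ι → ℝ), V.Finite ∧ V.Nonempty ∧ (∀ x ∈ V, IsLatticePt x) ∧ P = convexHull ℝ V

/-- A polytope is normal if for every `c ≥ 1` each lattice point of the dilation `c • P`
is a sum of `c` lattice points of `P`. -/
def IsNormal {ι : Type} (P : Set (ι → ℝ)) : Prop :=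
  ∀ c : ℕ, 0 < c → ∀ x : ι → ℝ, x ∈ (c : ℝ) • P → IsLatticePt x →
    ∃ f : Fin c → (ι → ℝ), (∀ i, f i ∈ P ∧ IsLatticePt (f i)) ∧ x = ∑ i, f i

/-- The vertex `(0,0)` of the pentagon with vertices `(0,0), (0,1), (1,0), (5,1), (1,5)`
is dark: no lattice point `z` outside the pentagon from which `(0,0)` is visible gives a
quantum jump. -/
theorem stmt_19 :
    ¬∃ z : Fin 2 → ℝ, IsLatticePt z ∧
      z ∉ convexHull ℝ {![(0 : ℝ), 0], ![0, 1], ![1, 0], ![5, 1], ![1, 5]} ∧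
      -- the vertex (0,0) is visible from z:
      segment ℝ z ![(0 : ℝ), 0] ∩
          convexHull ℝ {![(0 : ℝ), 0], ![0, 1], ![1, 0], ![5, 1], ![1, 5]} =
        {![(0 : ℝ), 0]} ∧
      -- (P, conv(P, z)) is a quantum jump:
      {x ∈ convexHull ℝ
          (insert z (convexHull ℝ {![(0 : ℝ), 0], ![0, 1], ![1, 0], ![5, 1], ![1, 5]})) |
        IsLatticePt x} =
        {x ∈ convexHull ℝ {![(0 : ℝ), 0], ![0, 1], ![1, 0], ![5, 1], ![1, 5]} |
          IsLatticePt x} ∪ {z} ∧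
      IsNormal (convexHull ℝ
        (insert z (convexHull ℝ {![(0 : ℝ), 0], ![0, 1], ![1, 0], ![5, 1], ![1, 5]}))) := by
  rintro ⟨z, hlat, hnotin, hseg, hjump, -⟩
  set V : Set (Fin 2 → ℝ) := {![(0 : ℝ), 0], ![0, 1], ![1, 0], ![5, 1], ![1, 5]} with hV
  obtain ⟨a, ha⟩ := hlat 0
  obtain ⟨b, hb⟩ := hlat 1
  have h00V : ![(0:ℝ),0] ∈ V := by simp [hV]
  have h01V : ![(0:ℝ),1] ∈ V := by simp [hV]
  have h10V : ![(1:ℝ),0] ∈ V := by simp [hV]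
  have h51V : ![(5:ℝ),1] ∈ V := by simp [hV]
  have h15V : ![(1:ℝ),5] ∈ V := by simp [hV]
  -- Step 1: a ≤ -1 or b ≤ -1
  have hneg : a ≤ -1 ∨ b ≤ -1 := by
    by_contra h
    push_neg at h
    have ha0 : 0 ≤ a := by omega
    have hb0 : 0 ≤ b := by omega
    have hz0 : ¬(a = 0 ∧ b = 0) := by
      rintro ⟨rfl, rfl⟩
      apply hnotin
      have : z = ![(0:ℝ), 0] := by
        funext i; fin_cases i <;> simp [ha, hb]
      rw [this]
      exact subset_convexHull ℝ V h00V
    have hab : 1 ≤ a + b := by omega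
    have hs : (0:ℝ) < (a:ℝ) + b := by
      have : (1:ℝ) ≤ (a:ℝ) + b := by exact_mod_cast hab
      linarith
    set s : ℝ := (a:ℝ) + b with hsdef
    set p : Fin 2 → ℝ := ![(a:ℝ)/s, (b:ℝ)/s] with hp
    have hpseg : p ∈ segment ℝ z ![(0:ℝ), 0] := by
      refine ⟨1/s, 1 - 1/s, by positivity, ?_, by ring, ?_⟩
      · have : 1/s ≤ 1 := by
          rw [div_le_one hs]
          have : (1:ℝ) ≤ (a:ℝ) + b := by exact_mod_cast hab
          linarith
        linarith
      · funext i; fin_cases i <;>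
          simp [hp, ha, hb] <;> ring
    have hphull : p ∈ convexHull ℝ V := by
      have hc := convex_convexHull ℝ V
      have := hc (subset_convexHull ℝ V h10V) (subset_convexHull ℝ V h01V)
        (a := (a:ℝ)/s) (b := (b:ℝ)/s) (by positivity) (by positivity)
        (by field_simp; exact hsdef.symm)
      convert this using 1
      funext i; fin_cases i <;> simp [hp] <;> ring
    have hpmem : p ∈ ({![(0:ℝ),0]} : Set (Fin 2 → ℝ)) := by
      rw [← hseg]; exact ⟨hpseg, hphull⟩
    rw [Set.mem_singleton_iff] at hpmem
    have h1 : p 0 + p 1 = 1 := by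
      simp [hp]; field_simp; exact hsdef.symm
    rw [hpmem] at h1
    norm_num at h1
  -- Step 2: key integer fact
  have key : (a ≤ -1 ∧ 3*a + 2 ≤ b) ∨ (b ≤ -1 ∧ 3*b + 2 ≤ a) := by omega
  -- memberships in big hull
  have hzC : z ∈ convexHull ℝ (insert z (convexHull ℝ V)) :=
    subset_convexHull ℝ _ (Set.mem_insert _ _)
  have hmemC : ∀ v ∈ V, v ∈ convexHull ℝ (insert z (convexHull ℝ V)) := fun v hv =>
    subset_convexHull ℝ _ (Set.mem_insert_of_mem _ (subset_convexHull ℝ V hv))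
  rcases key with ⟨ha1, hab1⟩ | ⟨hb1, hab2⟩
  · -- witness (0,2)
    have hd : (4:ℝ) ≤ (b:ℝ) - 5*a := by
      have : 4 ≤ b - 5*a := by omega
      exact_mod_cast this
    set d : ℝ := (b:ℝ) - 5*a with hddef
    have hd0 : 0 < d := by linarith
    have hwmem : ![(0:ℝ),2] ∈ convexHull ℝ (insert z (convexHull ℝ V)) := by
      set wts : Fin 3 → ℝ := ![2/d, ((b:ℝ)-3*a-2)/d, (-2*(a:ℝ))/d] with hwts
      set pts : Fin 3 → (Fin 2 → ℝ) := ![z, ![0,0], ![1,5]] with hpts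
      have hmem3 : ∀ i ∈ (Finset.univ : Finset (Fin 3)), pts i ∈ convexHull ℝ (insert z (convexHull ℝ V)) := by
          intro i _
          fin_cases i
          · exact hzC
          · exact hmemC _ h00V
          · exact hmemC _ h15V
      have := (convex_convexHull ℝ (insert z (convexHull ℝ V))).sum_mem
        (t := Finset.univ) (w := wts)
        (by
          intro i _
          fin_cases i <;> simp [hwts] <;>
            [positivity;
             (apply div_nonneg _ hd0.le;
              have : (0:ℝ) ≤ ((b:ℝ) - 3*a - 2) := by
                have : 0 ≤ b - 3*a - 2 := by omega
                exact_mod_cast this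
              linarith);
             (apply div_nonneg _ hd0.le;
              have : ((a:ℝ)) ≤ -1 := by exact_mod_cast ha1
              linarith)])
        (by
          simp [hwts, Fin.sum_univ_three]
          field_simp
          ring)
        hmem3
      convert this using 1
      funext i
      simp [hwts, hpts, Fin.sum_univ_three]
      fin_cases i <;> simp [ha, hb] <;> field_simp <;> ring
    have hwlat : IsLatticePt ![(0:ℝ),2] := by
      intro i; fin_cases i
      exacts [⟨0, by norm_num⟩, ⟨2, by norm_num⟩]
    have hw : ![(0:ℝ),2] ∈ {x ∈ convexHull ℝ V | IsLatticePt x} ∪ {z} := by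
      rw [← hjump]; exact ⟨hwmem, hwlat⟩
    rcases hw with ⟨hwP, -⟩ | hwz
    · have hsub : convexHull ℝ V ⊆ {x : Fin 2 → ℝ | -1 ≤ 4 * x 0 - x 1} := by
        apply convexHull_min
        · intro x hx
          simp only [hV, Set.mem_insert_iff, Set.mem_singleton_iff] at hx
          rcases hx with rfl | rfl | rfl | rfl | rfl <;> norm_num
        · have hlin : IsLinearMap ℝ (fun x : Fin 2 → ℝ => 4 * x 0 - x 1) := by
            constructor
            · intro x y; simp [Pi.add_apply]; ring
            · intro c x; simp [Pi.smul_apply, smul_eq_mul]; ring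
          exact convex_halfSpace_ge hlin (-1)
      have := hsub hwP
      norm_num at this
    · rw [Set.mem_singleton_iff] at hwz
      have : z 0 = 0 := by rw [← hwz]; norm_num
      rw [ha] at this
      have : a = 0 := by exact_mod_cast this
      omega
  · -- witness (2,0), symmetric
    have hd : (4:ℝ) ≤ (a:ℝ) - 5*b := by
      have : 4 ≤ a - 5*b := by omega
      exact_mod_cast this
    set d : ℝ := (a:ℝ) - 5*b with hddef
    have hd0 : 0 < d := by linarith
    have hwmem : ![(2:ℝ),0] ∈ convexHull ℝ (insert z (convexHull ℝ V)) := by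
      set wts : Fin 3 → ℝ := ![2/d, ((a:ℝ)-3*b-2)/d, (-2*(b:ℝ))/d] with hwts
      set pts : Fin 3 → (Fin 2 → ℝ) := ![z, ![0,0], ![5,1]] with hpts
      have hmem3 : ∀ i ∈ (Finset.univ : Finset (Fin 3)), pts i ∈ convexHull ℝ (insert z (convexHull ℝ V)) := by
          intro i _
          fin_cases i
          · exact hzC
          · exact hmemC _ h00V
          · exact hmemC _ h51V
      have := (convex_convexHull ℝ (insert z (convexHull ℝ V))).sum_mem
        (t := Finset.univ) (w := wts)
        (by
          intro i _
          fin_cases i <;> simp [hwts] <;>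
            [positivity;
             (apply div_nonneg _ hd0.le;
              have : (0:ℝ) ≤ ((a:ℝ) - 3*b - 2) := by
                have : 0 ≤ a - 3*b - 2 := by omega
                exact_mod_cast this
              linarith);
             (apply div_nonneg _ hd0.le;
              have : ((b:ℝ)) ≤ -1 := by exact_mod_cast hb1
              linarith)])
        (by
          simp [hwts, Fin.sum_univ_three]
          field_simp
          ring)
        hmem3
      convert this using 1
      funext i
      simp [hwts, hpts, Fin.sum_univ_three]
      fin_cases i <;> simp [ha, hb] <;> field_simp <;> ring
    have hwlat : IsLatticePt ![(2:ℝ),0] := by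
      intro i; fin_cases i
      exacts [⟨2, by norm_num⟩, ⟨0, by norm_num⟩]
    have hw : ![(2:ℝ),0] ∈ {x ∈ convexHull ℝ V | IsLatticePt x} ∪ {z} := by
      rw [← hjump]; exact ⟨hwmem, hwlat⟩
    rcases hw with ⟨hwP, -⟩ | hwz
    · have hsub : convexHull ℝ V ⊆ {x : Fin 2 → ℝ | -1 ≤ 4 * x 1 - x 0} := by
        apply convexHull_min
        · intro x hx
          simp only [hV, Set.mem_insert_iff, Set.mem_singleton_iff] at hx
          rcases hx with rfl | rfl | rfl | rfl | rfl <;> norm_num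
        · have hlin : IsLinearMap ℝ (fun x : Fin 2 → ℝ => 4 * x 1 - x 0) := by
            constructor
            · intro x y; simp [Pi.add_apply]; ring
            · intro c x; simp [Pi.smul_apply, smul_eq_mul]; ring
          exact convex_halfSpace_ge hlin (-1)
      have := hsub hwP
      norm_num at this
    · rw [Set.mem_singleton_iff] at hwz
      have : z 1 = 0 := by rw [← hwz]; norm_num
      rw [hb] at this
      have : b = 0 := by exact_mod_cast this
      omega
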